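/- Under the hypotheses of the previous statement (no shocks up to time T for a scalar conservation law uₜ + a(u)ₓ = 0 with a strictly convex), the cumulative distribution function F(t,x,U) = μ{ω : u(t,x,ω) < U} satisfies F(t,x,U) = F(0, x - a'(U)t, U) for all t ∈ [0,T], x ∈ ℝ, U ∈ ℝ. -/

import Mathlib

open MeasureTheory

/-- In the absence of shocks up to time `T`, the CDF of the pointwise statistics of a
scalar conservation law `uₜ + a(u)ₓ = 0` with strictly convex flux `a` satisfies
`F(t,x,U) = F(0, x - a'(U)t, U)`. -/
theorem stmt4 {Ω : Type*} [MeasurableSpace Ω] (μ : Measure Ω) [IsProbabilityMeasure μ]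
    (T : ℝ) (hT : 0 ≤ T)
    (a : ℝ → ℝ) (ha : Differentiable ℝ a) (hconv : StrictConvexOn ℝ Set.univ a)
    (u : ℝ → ℝ → Ω → ℝ)
    (hfwd : ∀ ω y t, 0 ≤ t → t ≤ T →
      u t (y + deriv a (u 0 y ω) * t) ω = u 0 y ω)
    (hback : ∀ ω t x, 0 ≤ t → t ≤ T →
      u t x ω = u 0 (x - deriv a (u t x ω) * t) ω)
    (F : ℝ → ℝ → ℝ → ℝ)
    (hF : ∀ t x U, F t x U = (μ {ω : Ω | u t x ω < U}).toReal) :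
    ∀ (t x U : ℝ), 0 ≤ t → t ≤ T → F t x U = F 0 (x - deriv a U * t) U := by
  intro t x U ht htT
  have hmono : StrictMono (deriv a) := by
    have := hconv.strictMonoOn_deriv (fun x _ => ha x)
    intro p q h
    exact this (Set.mem_univ p) (Set.mem_univ q) h
  -- no-crossing lemma
  have nocross : ∀ ω y1 y2, y1 ≤ y2 →
      deriv a (u 0 y2 ω) < deriv a (u 0 y1 ω) →
      y2 + deriv a (u 0 y2 ω) * t ≤ y1 + deriv a (u 0 y1 ω) * t → False := by
    intro ω y1 y2 hy hd hle
    set v1 := u 0 y1 ω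
    set v2 := u 0 y2 ω
    have hΔ : 0 < deriv a v1 - deriv a v2 := by linarith
    set s := (y2 - y1) / (deriv a v1 - deriv a v2) with hs
    have hs0 : 0 ≤ s := div_nonneg (by linarith) hΔ.le
    have hst : s ≤ t := by
      rw [div_le_iff₀ hΔ]; nlinarith
    have hsT : s ≤ T := hst.trans htT
    have h1 := hfwd ω y1 s hs0 hsT
    have h2 := hfwd ω y2 s hs0 hsT
    have hz : y1 + deriv a v1 * s = y2 + deriv a v2 * s := by
      have hsm : s * (deriv a v1 - deriv a v2) = y2 - y1 := by
        rw [hs]; exact div_mul_cancel₀ _ hΔ.ne'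
      linarith
    rw [hz, h2] at h1
    have hv : v2 = v1 := h1
    rw [hv] at hd
    exact lt_irrefl _ hd
  rw [hF, hF]
  congr 2
  ext ω
  simp only [Set.mem_setOf_eq]
  constructor
  · intro hw
    by_contra hv'
    push_neg at hv'
    set w := u t x ω with hwdef
    have hb := (hback ω t x ht htT).symm
    set y := x - deriv a w * t with hy
    set y' := x - deriv a U * t with hy'
    set v := u 0 y' ω with hv
    have hwU : deriv a w < deriv a U := hmono hw
    have hUv : deriv a U ≤ deriv a v := hmono.monotone hv'
    have hyy : y' ≤ y := by
      rw [hy, hy']; nlinarith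
    have hd : deriv a (u 0 y ω) < deriv a (u 0 y' ω) := by
      rw [hb, ← hv]
      calc deriv a w < deriv a U := hwU
        _ ≤ deriv a v := hUv
    refine nocross ω y' y hyy hd ?_
    rw [hb, ← hv, hy, hy']
    nlinarith
  · intro hv
    by_contra hw'
    push_neg at hw'
    set w := u t x ω with hwdef
    have hb := (hback ω t x ht htT).symm
    set y := x - deriv a w * t with hy
    set y' := x - deriv a U * t with hy'
    have hvU : deriv a (u 0 y' ω) < deriv a U := hmono hv
    have hUw : deriv a U ≤ deriv a w := hmono.monotone hw'
    have hyy : y ≤ y' := by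
      rw [hy, hy']; nlinarith
    have hd : deriv a (u 0 y' ω) < deriv a (u 0 y ω) := by
      rw [hb]
      calc deriv a (u 0 y' ω) < deriv a U := hvU
        _ ≤ deriv a w := hUw
    refine nocross ω y y' hyy hd ?_
    rw [hb, hy, hy']
    nlinarith
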